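/- Let S be a right cancellative monoid and R a commutative ring. Then R[S] contains a non-zero left integral if and only if S is a finite group. In particular, the group ring R[G] contains a non-zero integral if and only if G is finite. -/

import Mathlib

universe u v

/-- A left integral of `R[S]`: `s·t = t` for all `s ∈ S`. -/
def IsLeftIntegralMA (R : Type u) [CommRing R] {S : Type v} [Monoid S]
    (t : MonoidAlgebra R S) : Prop :=
  ∀ s : S, MonoidAlgebra.single s (1 : R) * t = t

lemma single_one_mul_eq_mapDomain {R : Type u} [CommRing R] {S : Type v} [Monoid S]
    (s : S) (t : MonoidAlgebra R S) :
    (MonoidAlgebra.single s (1 : R) * t).coeff = Finsupp.mapDomain (s * ·) t.coeff := by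
  rw [MonoidAlgebra.mul_def, MonoidAlgebra.coeff_single, Finsupp.sum_single_index]
  · simp [Finsupp.mapDomain, MonoidAlgebra.coeff_single]
  · simp

theorem monoidAlgebra_has_integral_iff_finite_group (R : Type u) [CommRing R] [Nontrivial R] :
    (∀ (S : Type v) (_ : Monoid S), (∀ a b c : S, b * a = c * a → b = c) →
      ((∃ t : MonoidAlgebra R S, t ≠ 0 ∧ IsLeftIntegralMA R t) ↔
        (Finite S ∧ ∀ s : S, ∃ y : S, s * y = 1 ∧ y * s = 1))) ∧
    (∀ (G : Type v) (_ : Group G),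
      (∃ t : MonoidAlgebra R G, t ≠ 0 ∧ IsLeftIntegralMA R t) ↔ Finite G) := by
  have main : ∀ (S : Type v) (_ : Monoid S), (∀ a b c : S, b * a = c * a → b = c) →
      ((∃ t : MonoidAlgebra R S, t ≠ 0 ∧ IsLeftIntegralMA R t) ↔
        (Finite S ∧ ∀ s : S, ∃ y : S, s * y = 1 ∧ y * s = 1)) := by
    intro S _ hrc
    constructor
    · rintro ⟨t, ht0, hint⟩
      classical
      -- find a ∈ support t
      obtain ⟨a, ha⟩ := Finsupp.ne_iff.mp (mt MonoidAlgebra.coeff_eq_zero.mp ht0)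
      have ha : a ∈ t.coeff.support := Finsupp.mem_support_iff.mpr (by simpa using ha)
      -- for each s, exists x ∈ support t with s * x = a
      have key : ∀ s : S, ∃ x ∈ t.coeff.support, s * x = a := by
        intro s
        have h1 : t.coeff.support ⊆ t.coeff.support.image (s * ·) := by
          conv_lhs => rw [← hint s]
          rw [single_one_mul_eq_mapDomain]
          exact Finsupp.mapDomain_support
        obtain ⟨x, hx, hxa⟩ := Finset.mem_image.mp (h1 ha)
        exact ⟨x, hx, hxa⟩
      choose x hx hxa using key
      have hfin : Finite S := by
        refine Finite.of_injective (fun s => (⟨x s, hx s⟩ : {y // y ∈ t.coeff.support})) ?_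
        intro s s' h
        apply hrc (x s) s s'
        rw [hxa s]
        have : x s = x s' := congrArg Subtype.val h
        rw [this, hxa s']
      refine ⟨hfin, fun s => ?_⟩
      -- right multiplication by anything is injective, hence bijective
      have hbij : ∀ u : S, Function.Bijective (· * u) := fun u =>
        Finite.injective_iff_bijective.mp (fun b c h => hrc u b c h)
      obtain ⟨y, hy'⟩ := (hbij s).2 1
      obtain ⟨z, hz'⟩ := (hbij y).2 1
      have hy : y * s = 1 := hy'
      have hz : z * y = 1 := hz'
      have hzs : z = s := by
        have : (z * y) * s = 1 * s := by rw [hz]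
        rw [mul_assoc, hy, mul_one, one_mul] at this
        exact this
      exact ⟨y, by rw [← hzs]; exact hz, hy⟩
    · rintro ⟨hfin, hinv⟩
      classical
      have : Fintype S := Fintype.ofFinite S
      refine ⟨∑ s : S, MonoidAlgebra.single s (1 : R), ?_, ?_⟩
      · intro h
        have h1 : (∑ s : S, MonoidAlgebra.single s (1 : R)).coeff 1 = 0 := by rw [h]; rfl
        rw [MonoidAlgebra.coeff_sum, Finset.sum_apply'] at h1
        simp [Finsupp.single_apply, MonoidAlgebra.coeff_single] at h1
      · intro s
        rw [Finset.mul_sum]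
        have hbij : Function.Bijective (s * ·) := by
          apply Finite.injective_iff_bijective.mp
          intro b c h
          have h' : s * b = s * c := h
          obtain ⟨y, hy1, hy2⟩ := hinv s
          have : y * (s * b) = y * (s * c) := by rw [h']
          rwa [← mul_assoc, ← mul_assoc, hy2, one_mul, one_mul] at this
        refine Fintype.sum_bijective _ hbij _ _ fun x => ?_
        rw [MonoidAlgebra.single_mul_single, one_mul]
  refine ⟨main, fun G _ => ?_⟩
  rw [main G _ (fun a b c h => mul_right_cancel h)]
  constructor
  · exact fun h => h.1
  · exact fun h => ⟨h, fun s => ⟨s⁻¹, mul_inv_cancel s, inv_mul_cancel s⟩⟩
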